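/- In the canonical model built from a maximal consistent set z, writing ‖A‖ = {x ∈ Δ | A ∈ x}: for every w ∈ Δ and every formula A, if ‖A‖ ≠ ∅ then ‖A‖ has a ≺_w-minimal element, i.e. min_{≺_w}(‖A‖) = {y ∈ ‖A‖ | ∀v, v ≺_w y → v ∉ ‖A‖} is nonempty. -/

import Mathlib

/-- Formulas of the language L_CSL: propositional variables, ⊥, negation,
conjunction, and the comparative similarity connective `cls` (A ⇇ B). -/
inductive CSLForm : Type
  | var : ℕ → CSLForm
  | bot : CSLForm
  | neg : CSLForm → CSLForm
  | and : CSLForm → CSLForm → CSLForm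
  | cls : CSLForm → CSLForm → CSLForm

namespace CSLForm

def top : CSLForm := neg bot
def or (A B : CSLForm) : CSLForm := neg (and (neg A) (neg B))
def imp (A B : CSLForm) : CSLForm := or (neg A) B

end CSLForm

/-- A boolean valuation respecting the classical connectives
(⇇-formulas and variables are treated as atoms). -/
def IsBoolVal (v : CSLForm → Bool) : Prop :=
  v .bot = false ∧ (∀ A, v (.neg A) = !v A) ∧ (∀ A B, v (.and A B) = (v A && v B))

/-- Classical tautologies of L_CSL. -/
def CSLTautology (A : CSLForm) : Prop := ∀ v, IsBoolVal v → v A = true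

/-- The Hilbert system CSMS. -/
inductive CSMS : CSLForm → Prop
  | taut {A : CSLForm} : CSLTautology A → CSMS A
  | mp {A B : CSLForm} : CSMS (A.imp B) → CSMS A → CSMS B
  | mon {A B : CSLForm} (C : CSLForm) : CSMS (A.imp B) → CSMS ((A.cls C).imp (B.cls C))
  | ax1 (A B : CSLForm) : CSMS ((A.cls B).neg.or (B.cls A).neg)
  | ax2 (A B C : CSLForm) : CSMS ((A.cls B).imp ((A.cls C).or (C.cls B)))
  | ax3 (A B : CSLForm) : CSMS ((A.and B.neg).imp (A.cls B))
  | ax4 (A B : CSLForm) : CSMS ((A.cls B).imp B.neg)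
  | ax5 (A B C : CSLForm) : CSMS (((A.cls B).and (A.cls C)).imp (A.cls (B.or C)))
  | ax6 (A : CSLForm) : CSMS ((A.cls .bot).imp (((A.cls .bot).neg.cls .bot).neg))

/-- Semantic extension of a formula, given preferential relations
`pref w x y` (meaning x ≺_w y) and a valuation of propositional variables. -/
def prefEval {W : Type} (pref : W → W → W → Prop) (val : ℕ → Set W) :
    CSLForm → Set W
  | .var i => val i
  | .bot => ∅
  | .neg A => (prefEval pref val A)ᶜ
  | .and A B => prefEval pref val A ∩ prefEval pref val B
  | .cls A B =>
      {w | ∃ x ∈ prefEval pref val A, ∀ y ∈ prefEval pref val B, pref w x y}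

/-- A CSL-preferential model. -/
structure CSLPrefModel (W : Type) where
  ne : Nonempty W
  pref : W → W → W → Prop
  modular : ∀ w x y z, pref w x y → pref w z y ∨ pref w x z
  centered : ∀ w x, x = w ∨ pref w w x
  limit : ∀ w (X : Set W), X.Nonempty → {y ∈ X | ∀ z, pref w z y → z ∉ X}.Nonempty
  val : ℕ → Set W

def CSLPrefModel.eval {W : Type} (M : CSLPrefModel W) : CSLForm → Set W :=
  prefEval M.pref M.val

/-- Distance from a point to a set, in ℝ≥0∞ (so that it is ∞ on the empty set). -/
noncomputable def setDist {W : Type} (d : W → W → ℝ) (w : W) (X : Set W) : ENNReal :=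
  ⨅ x ∈ X, ENNReal.ofReal (d w x)

/-- A CSL-distance minspace model. -/
structure CSLMinModel (W : Type) where
  ne : Nonempty W
  dist : W → W → ℝ
  dist_nonneg : ∀ x y, 0 ≤ dist x y
  dist_eq_zero : ∀ x y, dist x y = 0 ↔ x = y
  min_attained : ∀ (w : W) (X : Set W), X.Nonempty → ∃ x ∈ X, ∀ y ∈ X, dist w x ≤ dist w y
  val : ℕ → Set W

noncomputable def CSLMinModel.eval {W : Type} (M : CSLMinModel W) : CSLForm → Set W
  | .var i => M.val i
  | .bot => ∅
  | .neg A => (M.eval A)ᶜ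
  | .and A B => M.eval A ∩ M.eval B
  | .cls A B => {w | setDist M.dist w (M.eval A) < setDist M.dist w (M.eval B)}

/-- Iterated disjunction of a list of formulas. -/
def bigOr : List CSLForm → CSLForm
  | [] => .bot
  | [A] => A
  | A :: B :: rest => A.or (bigOr (B :: rest))

/-- Iterated conjunction of a list of formulas. -/
def bigAnd : List CSLForm → CSLForm
  | [] => .top
  | [A] => A
  | A :: B :: rest => A.and (bigAnd (B :: rest))

/-- Γ is inconsistent wrt CSMS: there are A₁,…,Aₙ ∈ Γ (n ≥ 1) with ⊢ ¬A₁ ⊔ … ⊔ ¬Aₙ. -/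
def Inconsistent (Γ : Set CSLForm) : Prop :=
  ∃ L : List CSLForm, L ≠ [] ∧ (∀ A ∈ L, A ∈ Γ) ∧ CSMS (bigOr (L.map .neg))

def Consistent (Γ : Set CSLForm) : Prop := ¬ Inconsistent Γ

def MaxConsistent (Γ : Set CSLForm) : Prop :=
  Consistent Γ ∧ ∀ A, A ∉ Γ → Inconsistent (insert A Γ)

/-- w^A = {¬B | (A ⇇ B) ∈ w}. -/
def projSet (w : Set CSLForm) (A : CSLForm) : Set CSLForm :=
  {F | ∃ B, F = CSLForm.neg B ∧ (A.cls B) ∈ w}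

/-- R(x,y) iff every A ∈ y satisfies (A ⇇ ⊥) ∈ x. -/
def Rrel (x y : Set CSLForm) : Prop := ∀ A, A ∈ y → (A.cls .bot) ∈ x

/-- The canonical preferential relation: x ≺_w y iff
∃ B ∈ y such that ∀ A ∈ x, (A ⇇ B) ∈ w. -/
def canonPrec (w x y : Set CSLForm) : Prop :=
  ∃ B, B ∈ y ∧ ∀ A, A ∈ x → (A.cls B) ∈ w

namespace CSLAux
open CSLForm

lemma bv_neg {v : CSLForm → Bool} (hv : IsBoolVal v) (A : CSLForm) :
    v (CSLForm.neg A) = !v A := hv.2.1 A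

lemma bv_or {v : CSLForm → Bool} (hv : IsBoolVal v) (A B : CSLForm) :
    v (A.or B) = (v A || v B) := by
  simp [CSLForm.or, hv.2.1, hv.2.2]

lemma bv_imp {v : CSLForm → Bool} (hv : IsBoolVal v) (A B : CSLForm) :
    v (A.imp B) = (!v A || v B) := by
  simp [CSLForm.imp, bv_or hv, hv.2.1]

lemma bv_top {v : CSLForm → Bool} (hv : IsBoolVal v) : v CSLForm.top = true := by
  simp [CSLForm.top, hv.2.1, hv.1]

lemma taut_imp {X Y : CSLForm} (h : ∀ v, IsBoolVal v → v X = true → v Y = true) :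
    CSLTautology (X.imp Y) := by
  intro v hv
  rw [bv_imp hv]
  rcases hx : v X with _ | _
  · simp
  · simp [h v hv hx]

lemma ent1 {X B : CSLForm} (h1 : CSMS X)
    (h : ∀ v, IsBoolVal v → v X = true → v B = true) : CSMS B :=
  CSMS.mp (CSMS.taut (taut_imp h)) h1

lemma ent2 {X Y B : CSLForm} (h1 : CSMS X) (h2 : CSMS Y)
    (h : ∀ v, IsBoolVal v → v X = true → v Y = true → v B = true) : CSMS B := by
  refine CSMS.mp (CSMS.mp (CSMS.taut (A := X.imp (Y.imp B)) ?_) h1) h2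
  intro v hv
  simp only [bv_imp hv]
  rcases hx : v X with _ | _
  · simp
  · rcases hy : v Y with _ | _
    · simp
    · simp [h v hv hx hy]

lemma ent3 {X Y Z B : CSLForm} (h1 : CSMS X) (h2 : CSMS Y) (h3 : CSMS Z)
    (h : ∀ v, IsBoolVal v → v X = true → v Y = true → v Z = true → v B = true) :
    CSMS B := by
  refine CSMS.mp (CSMS.mp (CSMS.mp (CSMS.taut (A := X.imp (Y.imp (Z.imp B))) ?_) h1) h2) h3
  intro v hv
  simp only [bv_imp hv]
  rcases hx : v X with _ | _
  · simp
  · rcases hy : v Y with _ | _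
    · simp
    · rcases hz : v Z with _ | _
      · simp
      · simp [h v hv hx hy hz]

/-- the canonical boolean valuation refuting ⊥ -/
def bval : CSLForm → Bool
  | .var _ => false
  | .bot => false
  | .neg A => !bval A
  | .and A B => bval A && bval B
  | .cls A B => bval A && !bval B

lemma bval_isBoolVal : IsBoolVal bval := ⟨rfl, fun _ => rfl, fun _ _ => rfl⟩

lemma csms_sound {A : CSLForm} (h : CSMS A) : bval A = true := by
  induction h with
  | taut ht => exact ht bval bval_isBoolVal
  | mp h1 h2 ih1 ih2 =>
      rw [bv_imp bval_isBoolVal, ih2] at ih1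
      simpa using ih1
  | mon C h ih =>
      rw [bv_imp bval_isBoolVal] at ih ⊢
      simp only [bval] at *
      cases hA : bval _ <;> cases hB : bval _ <;> cases hC : bval C <;> simp_all
  | ax1 A B =>
      simp only [bv_or bval_isBoolVal, bval]
      cases bval A <;> cases bval B <;> simp
  | ax2 A B C =>
      simp only [bv_imp bval_isBoolVal, bv_or bval_isBoolVal, bval]
      cases bval A <;> cases bval B <;> cases bval C <;> simp
  | ax3 A B =>
      simp only [bv_imp bval_isBoolVal, bval]
      cases bval A <;> cases bval B <;> simp
  | ax4 A B =>
      simp only [bv_imp bval_isBoolVal, bval]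
      cases bval A <;> cases bval B <;> simp
  | ax5 A B C =>
      simp only [bv_imp bval_isBoolVal, bv_or bval_isBoolVal, bval]
      cases bval A <;> cases bval B <;> cases bval C <;> simp
  | ax6 A =>
      simp only [bv_imp bval_isBoolVal, bval]
      cases bval A <;> simp

lemma not_csms_bot : ¬ CSMS CSLForm.bot := fun h => by simpa [bval] using csms_sound h

noncomputable local instance : DecidableEq CSLForm := fun _ _ => Classical.dec _

lemma bigOr_val {v : CSLForm → Bool} (hv : IsBoolVal v) (L : List CSLForm) :
    (v (bigOr L) = true ↔ ∃ A ∈ L, v A = true) := by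
  induction L with
  | nil => simp [bigOr, hv.1]
  | cons A rest ih =>
      cases rest with
      | nil => simp [bigOr]
      | cons B r =>
          rw [show bigOr (A :: B :: r) = A.or (bigOr (B :: r)) from rfl,
            bv_or hv]
          simp only [Bool.or_eq_true, ih]
          simp

lemma incons_intro {Γ : Set CSLForm} (L : List CSLForm) (hne : L ≠ [])
    (hsub : ∀ A ∈ L, A ∈ Γ) {X : CSLForm} (hX : CSMS X)
    (h : ∀ v, IsBoolVal v → v X = true → ∃ A ∈ L, v A = false) :
    Inconsistent Γ := by
  refine ⟨L, hne, hsub, ent1 hX (fun v hv hx => ?_)⟩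
  rw [bigOr_val hv]
  obtain ⟨B, hB, hBv⟩ := h v hv hx
  exact ⟨B.neg, List.mem_map_of_mem hB, by rw [bv_neg hv, hBv]; rfl⟩

lemma incons_intro2 {Γ : Set CSLForm} (L : List CSLForm) (hne : L ≠ [])
    (hsub : ∀ A ∈ L, A ∈ Γ) {X Y : CSLForm} (hX : CSMS X) (hY : CSMS Y)
    (h : ∀ v, IsBoolVal v → v X = true → v Y = true → ∃ A ∈ L, v A = false) :
    Inconsistent Γ := by
  refine ⟨L, hne, hsub, ent2 hX hY (fun v hv hx hy => ?_)⟩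
  rw [bigOr_val hv]
  obtain ⟨B, hB, hBv⟩ := h v hv hx hy
  exact ⟨B.neg, List.mem_map_of_mem hB, by rw [bv_neg hv, hBv]; rfl⟩

lemma incons_sem {Γ : Set CSLForm} (h : Inconsistent Γ) :
    ∃ L : List CSLForm, L ≠ [] ∧ (∀ A ∈ L, A ∈ Γ) ∧
      ∃ X, CSMS X ∧ ∀ v, IsBoolVal v → v X = true → ∃ A ∈ L, v A = false := by
  obtain ⟨L, hne, hsub, hcs⟩ := h
  refine ⟨L, hne, hsub, _, hcs, fun v hv hx => ?_⟩
  rw [bigOr_val hv] at hx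
  obtain ⟨F, hF, hFv⟩ := hx
  obtain ⟨B, hB, rfl⟩ := List.mem_map.1 hF
  rw [bv_neg hv] at hFv
  exact ⟨B, hB, by simpa using hFv⟩

section MaxCons
variable {Γ : Set CSLForm} (hΓ : MaxConsistent Γ)
include hΓ

lemma maxcons_not_both {B : CSLForm} (h1 : B ∈ Γ) (h2 : B.neg ∈ Γ) : False := by
  refine hΓ.1 (incons_intro [B, B.neg] (by simp) (by simp [h1, h2])
    (CSMS.taut (A := CSLForm.top) (fun v hv => bv_top hv)) (fun v hv _ => ?_))
  rcases hb : v B with _ | _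
  · exact ⟨B, by simp, hb⟩
  · exact ⟨B.neg, by simp, by rw [bv_neg hv, hb]; rfl⟩

lemma maxcons_thm {B : CSLForm} (h : CSMS B) : B ∈ Γ := by
  by_contra hB
  obtain ⟨L, hne, hsub, X, hX, hsem⟩ := incons_sem (hΓ.2 B hB)
  by_cases hall : ∀ A ∈ L, A = B
  · refine absurd (ent2 hX h (fun v hv hx hb => ?_) : CSMS CSLForm.bot) not_csms_bot
    obtain ⟨C, hC, hCv⟩ := hsem v hv hx
    rw [hall C hC, hb] at hCv; cases hCv
  · push_neg at hall
    obtain ⟨A₀, hA₀, hA₀ne⟩ := hall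
    refine hΓ.1 (incons_intro2 (L.filter (fun A => !decide (A = B)))
      ?_ ?_ hX h (fun v hv hx hb => ?_))
    · intro hemp
      have := List.filter_eq_nil_iff.1 hemp A₀ hA₀
      simp at this; exact hA₀ne this
    · intro C hC
      have h1 := List.of_mem_filter hC
      have h2 := List.mem_of_mem_filter hC
      simp only [Bool.not_eq_true', decide_eq_false_iff_not] at h1
      rcases hsub C h2 with h' | h'
      · exact absurd h' h1
      · exact h'
    · obtain ⟨C, hC, hCv⟩ := hsem v hv hx
      refine ⟨C, List.mem_filter.2 ⟨hC, ?_⟩, hCv⟩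
      simp only [Bool.not_eq_true', decide_eq_false_iff_not]
      rintro rfl; rw [hb] at hCv; cases hCv

lemma maxcons_neg_of_not_mem {B : CSLForm} (hB : B ∉ Γ) : B.neg ∈ Γ := by
  by_contra hnB
  obtain ⟨L, hLne, hLsub, X, hX, hXsem⟩ := incons_sem (hΓ.2 B hB)
  obtain ⟨M, hMne, hMsub, Y, hY, hYsem⟩ := incons_sem (hΓ.2 B.neg hnB)
  by_cases hLL : L.filter (fun F => !decide (F = B)) = []
  · -- all of L equals B, hence CSMS B.neg, hence B.neg ∈ Γ : contradiction
    refine hnB (maxcons_thm hΓ (ent1 hX (fun v hv hx => ?_)))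
    obtain ⟨C, hC, hCv⟩ := hXsem v hv hx
    have hCB : C = B := by
      by_contra hne
      have hmem : C ∈ List.filter (fun F => !decide (F = B)) L :=
        List.mem_filter.2 ⟨hC, by simp [hne]⟩
      rw [hLL] at hmem
      simp at hmem
    rw [bv_neg hv, ← hCB, hCv]; rfl
  · refine hΓ.1 (incons_intro2
      (L.filter (fun F => !decide (F = B)) ++ M.filter (fun F => !decide (F = B.neg)))
      (by simp [hLL]) ?_ hX hY (fun v hv hx hy => ?_))
    · intro C hC
      rcases List.mem_append.1 hC with h | h
      · have h1 := List.of_mem_filter h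
        have h2 := List.mem_of_mem_filter h
        simp only [Bool.not_eq_true', decide_eq_false_iff_not] at h1
        rcases hLsub C h2 with h' | h'
        · exact absurd h' h1
        · exact h'
      · have h1 := List.of_mem_filter h
        have h2 := List.mem_of_mem_filter h
        simp only [Bool.not_eq_true', decide_eq_false_iff_not] at h1
        rcases hMsub C h2 with h' | h'
        · exact absurd h' h1
        · exact h'
    · obtain ⟨C, hC, hCv⟩ := hXsem v hv hx
      obtain ⟨D, hD, hDv⟩ := hYsem v hv hy
      by_cases hCB : C = B
      · subst hCB
        refine ⟨D, List.mem_append_right _ (List.mem_filter.2 ⟨hD, ?_⟩), hDv⟩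
        simp only [Bool.not_eq_true', decide_eq_false_iff_not]
        rintro rfl
        rw [bv_neg hv, hCv] at hDv; cases hDv
      · exact ⟨C, List.mem_append_left _
          (List.mem_filter.2 ⟨hC, by simpa using hCB⟩), hCv⟩

lemma maxcons_neg_iff {B : CSLForm} : B.neg ∈ Γ ↔ B ∉ Γ :=
  ⟨fun h hB => maxcons_not_both hΓ hB h, maxcons_neg_of_not_mem hΓ⟩

/-- Γ is closed under tautological consequence from members and a theorem. -/
lemma maxcons_conseq (L : List CSLForm) (hL : ∀ A ∈ L, A ∈ Γ)
    {X B : CSLForm} (hX : CSMS X)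
    (h : ∀ v, IsBoolVal v → v X = true → (∀ A ∈ L, v A = true) → v B = true) :
    B ∈ Γ := by
  by_contra hB
  have hnB := maxcons_neg_of_not_mem hΓ hB
  refine hΓ.1 (incons_intro (B.neg :: L) (by simp)
    (by intro C hC; rcases List.mem_cons.1 hC with rfl | hC; exacts [hnB, hL C hC])
    hX (fun v hv hx => ?_))
  by_cases hall : ∀ A ∈ L, v A = true
  · exact ⟨B.neg, by simp, by rw [bv_neg hv, h v hv hx hall]; rfl⟩
  · push_neg at hall
    obtain ⟨C, hC, hCv⟩ := hall
    exact ⟨C, by simp [hC], by simpa using hCv⟩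

lemma maxcons_mp {B C : CSLForm} (himp : CSMS (B.imp C)) (hB : B ∈ Γ) : C ∈ Γ := by
  refine maxcons_conseq hΓ [B] (by simpa using hB) himp (fun v hv hx hall => ?_)
  have hb := hall B (by simp)
  rw [bv_imp hv, hb] at hx
  simpa using hx

lemma maxcons_and_mem {B C : CSLForm} (hB : B ∈ Γ) (hC : C ∈ Γ) : B.and C ∈ Γ := by
  refine maxcons_conseq hΓ [B, C] (by simp [hB, hC])
    (CSMS.taut (A := CSLForm.top) (fun v hv => bv_top hv)) (fun v hv _ hall => ?_)
  rw [hv.2.2, hall B (by simp), hall C (by simp)]; rfl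

lemma maxcons_or_elim {B C : CSLForm} (h : B.or C ∈ Γ) : B ∈ Γ ∨ C ∈ Γ := by
  by_contra hn
  push_neg at hn
  have hnB := maxcons_neg_of_not_mem hΓ hn.1
  have hnC := maxcons_neg_of_not_mem hΓ hn.2
  refine maxcons_not_both hΓ h (maxcons_conseq hΓ [B.neg, C.neg] (by simp [hnB, hnC])
    (CSMS.taut (A := CSLForm.top) (fun v hv => bv_top hv)) (fun v hv _ hall => ?_))
  have h1 := hall B.neg (by simp)
  have h2 := hall C.neg (by simp)
  rw [bv_neg hv] at h1 h2 ⊢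
  rw [bv_or hv]
  simp only [Bool.not_eq_true'] at h1 h2
  rw [h1, h2]; rfl

end MaxCons

lemma chain_finite_bound {c : Set (Set CSLForm)} (hc : IsChain (· ⊆ ·) c)
    (hne : c.Nonempty) (L : List CSLForm) (hL : ∀ A ∈ L, A ∈ ⋃₀ c) :
    ∃ s ∈ c, ∀ A ∈ L, A ∈ s := by
  induction L with
  | nil => obtain ⟨s, hs⟩ := hne; exact ⟨s, hs, by simp⟩
  | cons A rest ih =>
      obtain ⟨s, hs, hrest⟩ := ih (fun B hB => hL B (by simp [hB]))
      obtain ⟨t, ht, hAt⟩ := hL A (by simp)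
      have key : ∀ u ∈ c, A ∈ u → s ⊆ u ∨ u ⊆ s → ∃ s' ∈ c, ∀ B ∈ A :: rest, B ∈ s' := by
        intro u hu hAu hsu
        rcases hsu with h | h
        · exact ⟨u, hu, fun B hB => by
            rcases List.mem_cons.1 hB with rfl | hB; exacts [hAu, h (hrest B hB)]⟩
        · exact ⟨s, hs, fun B hB => by
            rcases List.mem_cons.1 hB with rfl | hB; exacts [h hAu, hrest B hB]⟩
      rcases eq_or_ne s t with rfl | hst
      · exact key s hs hAt (Or.inl subset_rfl)
      · exact key t ht hAt (hc hs ht hst)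

lemma lindenbaum {Γ : Set CSLForm} (h : Consistent Γ) :
    ∃ Δ, Γ ⊆ Δ ∧ MaxConsistent Δ := by
  have hzorn : ∀ c ⊆ {Δ : Set CSLForm | Consistent Δ ∧ Γ ⊆ Δ}, IsChain (· ⊆ ·) c →
      c.Nonempty → ∃ ub ∈ {Δ : Set CSLForm | Consistent Δ ∧ Γ ⊆ Δ}, ∀ s ∈ c, s ⊆ ub := by
    intro c hcS hchain hcne
    refine ⟨⋃₀ c, ⟨fun hinc => ?_, ?_⟩, fun s hs => Set.subset_sUnion_of_mem hs⟩
    · obtain ⟨L, hLne, hLsub, hcs⟩ := hinc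
      obtain ⟨s, hs, hsL⟩ := chain_finite_bound hchain hcne L hLsub
      exact (hcS hs).1 ⟨L, hLne, hsL, hcs⟩
    · obtain ⟨s, hs⟩ := hcne
      exact (hcS hs).2.trans (Set.subset_sUnion_of_mem hs)
  obtain ⟨m, hm, hmax⟩ := zorn_subset_nonempty _ hzorn Γ ⟨h, subset_rfl⟩
  refine ⟨m, hm, hmax.1.1, fun A hA => ?_⟩
  by_contra hcons
  have hmem : insert A m ∈ {Δ : Set CSLForm | Consistent Δ ∧ Γ ⊆ Δ} :=
    ⟨hcons, hmax.1.2.trans (Set.subset_insert _ _)⟩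
  exact hA (hmax.2 hmem (Set.subset_insert _ _) (Set.mem_insert _ _))

/-- List version of entailment closure. -/
lemma entL : ∀ (L : List CSLForm), (∀ A ∈ L, CSMS A) → ∀ {B : CSLForm},
    (∀ v, IsBoolVal v → (∀ A ∈ L, v A = true) → v B = true) → CSMS B
  | [], _, B, hsem => CSMS.taut (fun v hv => hsem v hv (by simp))
  | X :: rest, h, B, hsem => by
      refine CSMS.mp (entL rest (fun A hA => h A (by simp [hA])) (B := X.imp B)
        (fun v hv hall => ?_)) (h X (by simp))
      rw [bv_imp hv]
      rcases hx : v X with _ | _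
      · simp
      · have : v B = true := hsem v hv (fun A hA => by
          rcases List.mem_cons.1 hA with rfl | hA
          exacts [hx, hall A hA])
        simp [this]

/-- ⊢ ¬(X ⇇ X) -/
lemma csms_not_cls_self (X : CSLForm) : CSMS ((X.cls X).neg) :=
  ent1 (CSMS.ax1 X X) (fun v hv hx => by rw [bv_or hv] at hx; simpa using hx)

/-- If ⊢ C → B then ⊢ ¬(C ⇇ B). -/
lemma csms_not_cls_of_imp {B C : CSLForm} (h : CSMS (C.imp B)) :
    CSMS ((C.cls B).neg) := by
  refine ent2 (CSMS.mon B h) (csms_not_cls_self B) (fun v hv h1 h2 => ?_)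
  rw [bv_imp hv] at h1
  rw [bv_neg hv] at h2 ⊢
  rcases hx : v (C.cls B) with _ | _
  · rfl
  · rw [hx] at h1; simp at h1; rw [h1] at h2; simp at h2

/-- Anti-monotonicity in the second argument of ⇇. -/
lemma csms_cls_antimono {A B C : CSLForm} (h : CSMS (C.imp B)) :
    CSMS ((A.cls B).imp (A.cls C)) := by
  refine ent2 (CSMS.ax2 A B C) (csms_not_cls_of_imp h) (fun v hv h1 h2 => ?_)
  rw [bv_imp hv, bv_or hv] at h1
  rw [bv_neg hv] at h2
  rw [bv_imp hv]
  rcases hx : v (A.cls B) with _ | _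
  · rfl
  · rw [hx] at h1
    simp only [Bool.not_eq_true'] at h2
    simp [h2] at h1
    simp [h1]

/-- Four-premise entailment. -/
lemma ent4 {X1 X2 X3 X4 B : CSLForm} (h1 : CSMS X1) (h2 : CSMS X2) (h3 : CSMS X3)
    (h4 : CSMS X4)
    (h : ∀ v, IsBoolVal v → v X1 = true → v X2 = true → v X3 = true →
      v X4 = true → v B = true) : CSMS B := by
  refine ent3 h1 h2 h3 (B := X4.imp B) (fun v hv hx1 hx2 hx3 => ?_) |>.mp h4
  rw [bv_imp hv]
  rcases hx : v X4 with _ | _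
  · simp
  · simp [h v hv hx1 hx2 hx3 hx]

/-- Splitting a disjunction in the first argument of ⇇. -/
lemma csms_cls_split (A₁ A₂ C : CSLForm) :
    CSMS (((A₁.or A₂).cls C).imp ((A₁.cls C).or (A₂.cls C))) := by
  refine ent4 (CSMS.ax2 (A₁.or A₂) C A₁) (CSMS.ax2 (A₁.or A₂) C A₂)
    (CSMS.ax5 (A₁.or A₂) A₁ A₂) (csms_not_cls_self (A₁.or A₂))
    (fun v hv h1 h2 h3 h4 => ?_)
  rw [bv_imp hv, bv_or hv] at h1 h2
  rw [bv_imp hv, hv.2.2] at h3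
  rw [bv_neg hv] at h4
  rw [bv_imp hv, bv_or hv]
  simp only [Bool.or_eq_true, Bool.and_eq_true, Bool.not_eq_true', Bool.eq_false_iff, ne_eq] at *
  tauto

/-- ⊢ (A ⇇ D) → ((A ⊓ ¬D) ⇇ ⊥). -/
lemma csms_cls_to_nonempty (A D : CSLForm) :
    CSMS ((A.cls D).imp ((A.and D.neg).cls .bot)) := by
  have s1 : CSMS (A.imp ((A.and D.neg).or (A.and D))) := by
    refine CSMS.taut (fun v hv => ?_)
    rw [bv_imp hv, bv_or hv, hv.2.2, hv.2.2, bv_neg hv]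
    cases v A <;> cases v D <;> rfl
  have s2 := CSMS.mon D s1
  have s3 := csms_cls_split (A.and D.neg) (A.and D) D
  have s4 : CSMS ((A.and D).imp D) := by
    refine CSMS.taut (fun v hv => ?_)
    rw [bv_imp hv, hv.2.2]
    cases v A <;> cases v D <;> rfl
  have s5 : CSMS (((A.and D).cls D).neg) := csms_not_cls_of_imp s4
  have s7 : CSMS (((A.and D.neg).cls D).imp ((A.and D.neg).cls .bot)) := by
    refine csms_cls_antimono (CSMS.taut (fun v hv => ?_))
    rw [bv_imp hv, hv.1]
    rfl
  refine ent4 s2 s3 s5 s7 (fun v hv h1 h2 h3 h4 => ?_)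
  rw [bv_imp hv] at h1 h2 h4 ⊢
  rw [bv_or hv] at h2
  rw [bv_neg hv] at h3
  simp only [Bool.or_eq_true, Bool.not_eq_true', Bool.eq_false_iff, ne_eq] at *
  tauto

section MaxCons2
variable {Γ : Set CSLForm} (hΓ : MaxConsistent Γ)
include hΓ

/-- Iterated ax5. -/
lemma maxcons_cls_bigOr (A : CSLForm) :
    ∀ (Bs : List CSLForm), Bs ≠ [] → (∀ B ∈ Bs, (A.cls B) ∈ Γ) →
      (A.cls (bigOr Bs)) ∈ Γ
  | [], h, _ => absurd rfl h
  | [B], _, hmem => hmem B (by simp)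
  | B :: C :: rest, _, hmem => by
      have h2 : (A.cls (bigOr (C :: rest))) ∈ Γ :=
        maxcons_cls_bigOr A (C :: rest) (by simp)
          (fun B' hB' => hmem B' (by simp [hB']))
      have h1 : (A.cls B) ∈ Γ := hmem B (by simp)
      have := CSMS.ax5 A B (bigOr (C :: rest))
      exact maxcons_mp hΓ this (maxcons_and_mem hΓ h1 h2)

/-- If (⋁Cs ⇇ ⊥) ∈ Γ then some (C ⇇ ⊥) ∈ Γ. -/
lemma maxcons_cls_bot_elim :
    ∀ (Cs : List CSLForm), Cs ≠ [] → ((bigOr Cs).cls .bot) ∈ Γ →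
      ∃ C ∈ Cs, (C.cls .bot) ∈ Γ
  | [], h, _ => absurd rfl h
  | [C], _, hmem => ⟨C, by simp, hmem⟩
  | C :: D :: rest, _, hmem => by
      rw [show bigOr (C :: D :: rest) = C.or (bigOr (D :: rest)) from rfl] at hmem
      have := maxcons_mp hΓ (csms_cls_split C (bigOr (D :: rest)) .bot) hmem
      rcases maxcons_or_elim hΓ this with h | h
      · exact ⟨C, by simp, h⟩
      · obtain ⟨C', hC', hmem'⟩ := maxcons_cls_bot_elim (D :: rest) (by simp) h
        exact ⟨C', by simp [hC'], hmem'⟩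

/-- Transfer along R: ((F ⇇ ⊥) ⇇ ⊥) ∈ Γ → (F ⇇ ⊥) ∈ Γ. Uses axiom 6. -/
lemma maxcons_cls_bot_transfer {F : CSLForm}
    (h : ((F.cls .bot).cls .bot) ∈ Γ) : (F.cls .bot) ∈ Γ := by
  set G := F.cls CSLForm.bot with hG
  by_contra hGn
  have hnegG : G.neg ∈ Γ := maxcons_neg_of_not_mem hΓ hGn
  -- H := (¬G ⇇ ⊥) ∈ Γ by ax3
  have hH : ((G.neg).cls .bot) ∈ Γ := by
    refine maxcons_mp hΓ (ent2 (CSMS.ax3 G.neg .bot)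
      (CSMS.taut (A := (G.neg).imp ((G.neg).and CSLForm.bot.neg)) (fun v hv => ?_))
      (fun v hv h1 h2 => ?_)) hnegG
    · rw [bv_imp hv, hv.2.2, bv_neg hv, bv_neg hv, hv.1]
      cases v G <;> rfl
    · rw [bv_imp hv] at h1 h2 ⊢
      rcases hx : v (G.neg) with _ | _
      · rfl
      · rw [hx] at h2; simp at h2
        rw [h2] at h1; simpa using h1
  -- from h and ax6 F via Mon: ((¬H) ⇇ ⊥) ∈ Γ
  have hHn : (((((G.neg).cls .bot).neg)).cls .bot) ∈ Γ :=
    maxcons_mp hΓ (CSMS.mon .bot (CSMS.ax6 F)) h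
  -- ax6 (G.neg) at H gives the negation of that
  have := maxcons_mp hΓ (CSMS.ax6 G.neg) hH
  exact maxcons_not_both hΓ hHn this

end MaxCons2

/-- Classify the members of a list included in the union defining Γ₀. -/
lemma classify (w z : Set CSLForm) (A : CSLForm) :
    ∀ L : List CSLForm,
      (∀ F ∈ L, F ∈ insert A (projSet w A ∪
        {F | ∃ C, F = CSLForm.neg C ∧ (C.cls .bot) ∉ z})) →
      ∃ Bs Cs : List CSLForm,
        (∀ B ∈ Bs, (A.cls B) ∈ w) ∧ (∀ C ∈ Cs, (C.cls .bot) ∉ z) ∧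
        ∀ F ∈ L, F = A ∨ (∃ B ∈ Bs, F = B.neg) ∨ (∃ C ∈ Cs, F = C.neg)
  | [], _ => ⟨[], [], by simp, by simp, by simp⟩
  | F :: rest, h => by
      obtain ⟨Bs, Cs, hBs, hCs, hcov⟩ :=
        classify w z A rest (fun G hG => h G (by simp [hG]))
      rcases Set.mem_insert_iff.1 (h F (by simp)) with rfl | hF
      · refine ⟨Bs, Cs, hBs, hCs, fun G hG => ?_⟩
        rcases List.mem_cons.1 hG with rfl | hG
        · exact Or.inl rfl
        · exact hcov G hG
      · rcases hF with ⟨B, rfl, hB⟩ | ⟨C, rfl, hC⟩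
        · refine ⟨B :: Bs, Cs, ?_, hCs, fun G hG => ?_⟩
          · intro B' hB'
            rcases List.mem_cons.1 hB' with rfl | hB'
            exacts [hB, hBs B' hB']
          · rcases List.mem_cons.1 hG with rfl | hG
            · exact Or.inr (Or.inl ⟨B, by simp, rfl⟩)
            · rcases hcov G hG with h | ⟨B', hB', rfl⟩ | h
              · exact Or.inl h
              · exact Or.inr (Or.inl ⟨B', by simp [hB'], rfl⟩)
              · exact Or.inr (Or.inr h)
        · refine ⟨Bs, C :: Cs, hBs, ?_, fun G hG => ?_⟩
          · intro C' hC'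
            rcases List.mem_cons.1 hC' with rfl | hC'
            exacts [hC, hCs C' hC']
          · rcases List.mem_cons.1 hG with rfl | hG
            · exact Or.inr (Or.inr ⟨C, by simp, rfl⟩)
            · rcases hcov G hG with h | h | ⟨C', hC', rfl⟩
              · exact Or.inl h
              · exact Or.inr (Or.inl h)
              · exact Or.inr (Or.inr ⟨C', by simp [hC'], rfl⟩)

end CSLAux

open CSLAux in
/-- in the canonical model over z, if ‖A‖ = {x ∈ Δ | A ∈ x} is
nonempty then it has a ≺_w-minimal element, for any w ∈ Δ. -/
theorem canonical_limit_assumption (z : Set CSLForm) (hz : MaxConsistent z)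
    (w : Set CSLForm) (hw : MaxConsistent w ∧ Rrel z w) (A : CSLForm)
    (hne : ∃ x : Set CSLForm, (MaxConsistent x ∧ Rrel z x) ∧ A ∈ x) :
    ∃ y : Set CSLForm, (MaxConsistent y ∧ Rrel z y) ∧ A ∈ y ∧
      ∀ v : Set CSLForm, (MaxConsistent v ∧ Rrel z v) →
        canonPrec w v y → A ∉ v := by
  obtain ⟨x, ⟨hx, hRzx⟩, hAx⟩ := hne
  obtain ⟨hwmc, hRzw⟩ := hw
  have hcons : Consistent (insert A (projSet w A ∪
      {F | ∃ C, F = CSLForm.neg C ∧ (C.cls .bot) ∉ z})) := by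
    intro hinc
    obtain ⟨L, hLne, hLsub, X, hX, hXsem⟩ := incons_sem hinc
    obtain ⟨Bs, Cs, hBs, hCs, hcov⟩ := classify w z A L hLsub
    have hkey : CSMS ((A.and (bigOr Bs).neg).imp (bigOr Cs)) := by
      refine ent1 hX (fun v hv hx' => ?_)
      rw [bv_imp hv, hv.2.2, bv_neg hv]
      rcases ha : v A with _ | _
      · rfl
      rcases hd : v (bigOr Bs) with _ | _
      · obtain ⟨F, hF, hFv⟩ := hXsem v hv hx'
        rcases hcov F hF with rfl | ⟨B, hB, rfl⟩ | ⟨C, hC, rfl⟩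
        · rw [ha] at hFv; cases hFv
        · rw [bv_neg hv] at hFv
          have hFv' : v B = true := by revert hFv; cases v B <;> simp
          have : v (bigOr Bs) = true := (bigOr_val hv Bs).2 ⟨B, hB, hFv'⟩
          rw [hd] at this; cases this
        · rw [bv_neg hv] at hFv
          have hFv' : v C = true := by revert hFv; cases v C <;> simp
          have : v (bigOr Cs) = true := (bigOr_val hv Cs).2 ⟨C, hC, hFv'⟩
          simp [this]
      · simp
    rcases Cs with _ | ⟨C0, Cs'⟩
    · -- no C's: ⊢ A → ⋁Bs
      have hAD : CSMS (A.imp (bigOr Bs)) := by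
        refine ent1 hkey (fun v hv h1 => ?_)
        rw [bv_imp hv, hv.2.2, bv_neg hv] at h1
        rw [bv_imp hv]
        rw [show bigOr ([] : List CSLForm) = .bot from rfl, hv.1] at h1
        simp only [Bool.or_eq_true, Bool.and_eq_true, Bool.not_eq_true',
          Bool.eq_false_iff, ne_eq] at h1 ⊢
        tauto
      rcases Bs with _ | ⟨B0, Bs'⟩
      · -- ⊢ ¬A, contradicting A ∈ x
        have hnA : CSMS A.neg := by
          refine ent1 hAD (fun v hv h1 => ?_)
          rw [bv_imp hv, show bigOr ([] : List CSLForm) = .bot from rfl, hv.1] at h1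
          rw [bv_neg hv]
          simp only [Bool.or_eq_true, Bool.not_eq_true',
            Bool.eq_false_iff, ne_eq] at h1 ⊢
          tauto
        exact hx.1 ⟨[A], by simp, by simp [hAx], hnA⟩
      · have hADw : (A.cls (bigOr (B0 :: Bs'))) ∈ w :=
          maxcons_cls_bigOr hwmc A _ (by simp) hBs
        have h2 : ((bigOr (B0 :: Bs')).cls (bigOr (B0 :: Bs'))) ∈ w :=
          maxcons_mp hwmc (CSMS.mon _ hAD) hADw
        exact maxcons_not_both hwmc h2
          (maxcons_thm hwmc (csms_not_cls_self _))
    · -- some C's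
      have hz1 : ((A.and (bigOr Bs).neg).cls .bot) ∈ z := by
        rcases Bs with _ | ⟨B0, Bs'⟩
        · have hA0 : (A.cls .bot) ∈ z := hRzx A hAx
          refine maxcons_mp hz (CSMS.mon .bot (CSMS.taut (fun v hv => ?_))) hA0
          rw [bv_imp hv, hv.2.2, bv_neg hv,
            show bigOr ([] : List CSLForm) = .bot from rfl, hv.1]
          cases v A <;> rfl
        · have hADw : (A.cls (bigOr (B0 :: Bs'))) ∈ w :=
            maxcons_cls_bigOr hwmc A _ (by simp) hBs
          have h1 : ((A.and (bigOr (B0 :: Bs')).neg).cls .bot) ∈ w :=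
            maxcons_mp hwmc (csms_cls_to_nonempty A _) hADw
          exact maxcons_cls_bot_transfer hz (hRzw _ h1)
      have hz2 : ((bigOr (C0 :: Cs')).cls .bot) ∈ z :=
        maxcons_mp hz (CSMS.mon .bot hkey) hz1
      obtain ⟨C, hC, hCz⟩ := maxcons_cls_bot_elim hz _ (by simp) hz2
      exact hCs C hC hCz
  obtain ⟨y, hsub, hy⟩ := lindenbaum hcons
  refine ⟨y, ⟨hy, fun C hCy => ?_⟩, hsub (Set.mem_insert _ _), fun v hv hprec hAv => ?_⟩
  · by_contra hCz
    exact maxcons_not_both hy hCy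
      (hsub (Set.mem_insert_iff.2 (Or.inr (Or.inr ⟨C, rfl, hCz⟩))))
  · obtain ⟨B, hBy, hBall⟩ := hprec
    have hABw : (A.cls B) ∈ w := hBall A hAv
    exact maxcons_not_both hy hBy
      (hsub (Set.mem_insert_iff.2 (Or.inr (Or.inl ⟨B, rfl, hABw⟩))))
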